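/- Let k, r, p > 0 and F: ℕ^k → ℕ^r be a function satisfying |F(x)| ≤ min(x) for all x ∈ ℕ^k. Then there exists a set E ⊆ ℕ with |E| = p such that the image F[E^k] has cardinality at most k^k · p. -/

import Mathlib

open Set

/-- assemble a `k`-tuple from a bottom value `a` and higher values `A` via pattern `pat`. -/
def tup (k : ℕ) (a : ℕ) (pat : Fin k → Fin k) (A : Fin (k-1) → ℕ) : Fin k → ℕ :=
  fun i => if _ : (pat i : ℕ) = 0 then a
    else A ⟨(pat i : ℕ) - 1, by have := (pat i).isLt; omega⟩

/-- Infinite Ramsey theorem for strictly increasing `m`-tuples of naturals with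
finitely many colors. -/
lemma myRamsey {α : Type} [Fintype α] [Nonempty α] :
    ∀ (m : ℕ) (C : (Fin m → ℕ) → α) (S : Set ℕ), S.Infinite →
    ∃ T, T ⊆ S ∧ T.Infinite ∧ ∀ f g : Fin m → ℕ, StrictMono f → StrictMono g →
      (∀ i, f i ∈ T) → (∀ i, g i ∈ T) → C f = C g := by
  intro m
  induction m with
  | zero =>
      intro C S hS
      exact ⟨S, subset_rfl, hS, fun f g _ _ _ _ => by rw [Subsingleton.elim f g]⟩
  | succ m IH =>
      intro C S hS
      have step : ∀ U : Set ℕ, U.Infinite →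
          ∃ V, V ⊆ U \ Set.Iic (sInf U) ∧ V.Infinite ∧
            ∀ f g : Fin m → ℕ, StrictMono f → StrictMono g →
              (∀ i, f i ∈ V) → (∀ i, g i ∈ V) →
              C (Fin.cons (sInf U) f) = C (Fin.cons (sInf U) g) := by
        intro U hU
        obtain ⟨V, h1, h2, h3⟩ := IH (fun A => C (Fin.cons (sInf U) A))
          (U \ Set.Iic (sInf U)) (hU.diff (Set.finite_Iic _))
        exact ⟨V, h1, h2, fun f g hf hg hfV hgV => h3 f g hf hg hfV hgV⟩
      choose nextF hsub hinf hmono using step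
      set Φ : ℕ → {U : Set ℕ // U.Infinite} := fun n =>
        Nat.rec ⟨S, hS⟩ (fun _ p => ⟨nextF p.1 p.2, hinf p.1 p.2⟩) n with hΦdef
      have hΦ : ∀ n, (Φ (n+1)).1 = nextF (Φ n).1 (Φ n).2 := fun n => rfl
      set a : ℕ → ℕ := fun n => sInf (Φ n).1 with ha
      have hmem : ∀ n, a n ∈ (Φ n).1 := fun n => Nat.sInf_mem (Φ n).2.nonempty
      have hsub' : ∀ n, (Φ (n+1)).1 ⊆ (Φ n).1 \ Set.Iic (a n) := fun n => hsub _ _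
      have hΦS : ∀ n, (Φ n).1 ⊆ S := by
        intro n
        induction n with
        | zero => exact subset_rfl
        | succ n ih => exact fun x hx => ih ((hsub' n hx).1)
      have hanti : ∀ n n', n ≤ n' → (Φ n').1 ⊆ (Φ n).1 := by
        intro n n' h
        induction n' with
        | zero => have : n = 0 := Nat.le_zero.mp h; subst this; exact subset_rfl
        | succ n' ih =>
            rcases Nat.lt_or_ge n (n'+1) with h' | h'
            · exact fun x hx => ih (Nat.lt_succ_iff.mp h') ((hsub' n' hx).1)
            · have : n = n' + 1 := le_antisymm h h'
              subst this; exact subset_rfl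
      have hasm : StrictMono a := by
        apply strictMono_nat_of_lt_succ
        intro n
        have := (hsub' n (hmem (n+1))).2
        simpa using lt_of_not_ge (by simpa using this)
      -- the color of stage n
      set b : ℕ → α := fun n =>
        C (Fin.cons (a n) (fun t => Nat.nth (· ∈ (Φ (n+1)).1) t)) with hb
      have hpig : ∃ col : α, {n | b n = col}.Infinite := by
        by_contra h
        push_neg at h
        have huniv : (Set.univ : Set ℕ) = ⋃ col, {n | b n = col} := by
          ext n; simp
        exact Set.infinite_univ (huniv ▸ Set.finite_iUnion h)
      obtain ⟨col, hcol⟩ := hpig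
      refine ⟨a '' {n | b n = col}, ?_, hcol.image (hasm.injective.injOn), ?_⟩
      · rintro x ⟨n, _, rfl⟩
        exact hΦS n (hmem n)
      · -- main: every increasing tuple in T has color `col`
        have key : ∀ f : Fin (m+1) → ℕ, StrictMono f →
            (∀ i, f i ∈ a '' {n | b n = col}) → C f = col := by
          intro f hf hfT
          obtain ⟨n, hn, hfn⟩ := hfT 0
          -- tail of f lands in Φ (n+1)
          have htail : ∀ i : Fin m, f (Fin.succ i) ∈ (Φ (n+1)).1 := by
            intro i
            obtain ⟨n', _, hfn'⟩ := hfT (Fin.succ i)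
            have hgt : a n < a n' := by
              rw [hfn, hfn']
              exact hf (Fin.succ_pos i)
            have : n < n' := hasm.lt_iff_lt.mp hgt
            rw [← hfn']
            exact hanti (n+1) n' this (hmem n')
          have htmono : StrictMono (Fin.tail f) := by
            intro i j hij
            exact hf (by simpa [Fin.succ_lt_succ_iff] using hij)
          have hnth_sm : StrictMono (fun t : Fin m => Nat.nth (· ∈ (Φ (n+1)).1) t) := by
            intro i j hij
            exact Nat.nth_strictMono (Φ (n+1)).2 (by exact_mod_cast hij)
          have hnth_mem : ∀ t : Fin m, Nat.nth (· ∈ (Φ (n+1)).1) t ∈ (Φ (n+1)).1 :=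
            fun t => Nat.nth_mem_of_infinite (Φ (n+1)).2 t
          have h1 : C f = C (Fin.cons (a n) (Fin.tail f)) := by
            rw [hfn, Fin.cons_self_tail]
          have h2 : C (Fin.cons (a n) (Fin.tail f))
              = C (Fin.cons (a n) (fun t => Nat.nth (· ∈ (Φ (n+1)).1) t)) := by
            exact hmono (Φ n).1 (Φ n).2 (Fin.tail f) _ htmono hnth_sm htail hnth_mem
          rw [h1, h2]
          exact hn
        intro f g hf hg hfT hgT
        rw [key f hf hfT, key g hg hgT]

lemma mainStages (k r : ℕ) (hk : 0 < k) (F : (Fin k → ℕ) → Fin r → ℕ)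
    (hF : ∀ x, (⨆ i, F x i) ≤ ⨅ i, x i) :
    ∃ (e : ℕ → ℕ) (S : ℕ → Set ℕ),
      (∀ n, (S n).Infinite) ∧
      (∀ n, e n ∈ S n) ∧
      (∀ n, S (n+1) ⊆ S n) ∧
      (∀ n, ∀ x ∈ S (n+1), e n < x) ∧
      (∀ n (pat : Fin k → Fin k) (A B : Fin (k-1) → ℕ), StrictMono A → StrictMono B →
        (∀ t, A t ∈ S (n+1)) → (∀ t, B t ∈ S (n+1)) → (∃ i, (pat i : ℕ) = 0) →
        F (tup k (e n) pat A) = F (tup k (e n) pat B)) := by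
  classical
  -- the truncated coloring at bottom value `a`
  set Cst : (a : ℕ) → (Fin (k-1) → ℕ) → ((Fin k → Fin k) → Fin r → Fin (a+1)) :=
    fun a A pat i' => ⟨min (F (tup k a pat A) i') a, Nat.lt_succ_of_le (min_le_right _ _)⟩
    with hCst
  have step : ∀ U : Set ℕ, U.Infinite →
      ∃ V, V ⊆ U \ Set.Iic (sInf U) ∧ V.Infinite ∧
        ∀ f g : Fin (k-1) → ℕ, StrictMono f → StrictMono g →
          (∀ i, f i ∈ V) → (∀ i, g i ∈ V) →
          Cst (sInf U) f = Cst (sInf U) g := by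
    intro U hU
    exact myRamsey (k-1) (Cst (sInf U)) (U \ Set.Iic (sInf U)) (hU.diff (Set.finite_Iic _))
  choose nextF hsub hinf hmono using step
  set Φ : ℕ → {U : Set ℕ // U.Infinite} := fun n =>
    Nat.rec ⟨Set.univ, Set.infinite_univ⟩ (fun _ p => ⟨nextF p.1 p.2, hinf p.1 p.2⟩) n with hΦdef
  set e : ℕ → ℕ := fun n => sInf (Φ n).1 with he
  have hmem : ∀ n, e n ∈ (Φ n).1 := fun n => Nat.sInf_mem (Φ n).2.nonempty
  have hsub' : ∀ n, (Φ (n+1)).1 ⊆ (Φ n).1 \ Set.Iic (e n) := fun n => hsub _ _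
  refine ⟨e, fun n => (Φ n).1, fun n => (Φ n).2, hmem, fun n x hx => (hsub' n hx).1, ?_, ?_⟩
  · intro n x hx
    have := (hsub' n hx).2
    simpa using lt_of_not_ge (by simpa using this)
  · intro n pat A B hA hB hAm hBm ⟨i0, hi0⟩
    have hcol : Cst (e n) A = Cst (e n) B := hmono (Φ n).1 (Φ n).2 A B hA hB hAm hBm
    -- F values are bounded by e n
    have hbd : ∀ (X : Fin (k-1) → ℕ), (∀ t, X t ∈ (Φ (n+1)).1) →
        ∀ i' : Fin r, F (tup k (e n) pat X) i' ≤ e n := by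
      intro X hX i'
      have h0 : tup k (e n) pat X i0 = e n := by
        simp [tup, hi0]
      calc F (tup k (e n) pat X) i' ≤ ⨆ i, F (tup k (e n) pat X) i :=
            le_ciSup ((Set.finite_range _).bddAbove) i'
        _ ≤ ⨅ i, tup k (e n) pat X i := hF _
        _ ≤ tup k (e n) pat X i0 := ciInf_le (OrderBot.bddBelow _) i0
        _ = e n := h0
    funext i'
    have := congrFun (congrFun hcol pat) i'
    rw [hCst] at this
    simp only [Fin.mk.injEq] at this
    have hA' := hbd A hAm i'
    have hB' := hbd B hBm i'
    omega

theorem stmt_0 (k r p : ℕ) (hk : 0 < k) (hr : 0 < r) (hp : 0 < p)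
    (F : (Fin k → ℕ) → (Fin r → ℕ))
    (hF : ∀ x : Fin k → ℕ, (⨆ i, F x i) ≤ ⨅ i, x i) :
    ∃ E : Finset ℕ, E.card = p ∧
      (F '' {x : Fin k → ℕ | ∀ i, x i ∈ E}).Finite ∧
      (F '' {x : Fin k → ℕ | ∀ i, x i ∈ E}).ncard ≤ k ^ k * p := by
  classical
  obtain ⟨e, S, hSinf, hmem, hSsub, hgt, hkey⟩ := mainStages k r hk F hF
  have hanti : ∀ m n, m ≤ n → S n ⊆ S m := by
    intro m n h
    induction n with
    | zero => have : m = 0 := Nat.le_zero.mp h; subst this; exact subset_rfl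
    | succ n ih =>
        rcases Nat.lt_or_ge m (n+1) with h' | h'
        · exact fun x hx => ih (Nat.lt_succ_iff.mp h') (hSsub n hx)
        · have : m = n + 1 := le_antisymm h h'
          subst this; exact subset_rfl
  have hesm : StrictMono e := strictMono_nat_of_lt_succ (fun n => hgt n _ (hmem (n+1)))
  refine ⟨(Finset.range p).image e, ?_, ?_, ?_⟩
  · rw [Finset.card_image_of_injective _ hesm.injective, Finset.card_range]
  all_goals {
  have hsubG : F '' {x : Fin k → ℕ | ∀ i, x i ∈ (Finset.range p).image e} ⊆
      Set.range (fun q : Fin p × (Fin k → Fin k) =>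
        F (tup k (e q.1) q.2 (fun t => Nat.nth (· ∈ S (q.1+1)) t))) := by
    rintro y ⟨x, hx, rfl⟩
    obtain ⟨i0, -, hmin⟩ := Finset.exists_min_image Finset.univ x ⟨⟨0, hk⟩, Finset.mem_univ _⟩
    obtain ⟨j, hjp, hej⟩ : ∃ j ∈ Finset.range p, e j = x i0 := by
      have := hx i0
      simpa [Finset.mem_image] using this
    rw [Finset.mem_range] at hjp
    -- the set of values strictly above the minimum
    set T : Finset ℕ := (Finset.image x Finset.univ).filter (fun v => e j < v) with hT
    set m : ℕ := T.card with hm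
    have hmk : m ≤ k - 1 := by
      have h1 : T ⊆ (Finset.image x Finset.univ).erase (e j) := by
        intro w hw
        rw [Finset.mem_filter] at hw
        exact Finset.mem_erase.mpr ⟨by omega, hw.1⟩
      have h2 : e j ∈ Finset.image x Finset.univ := by
        rw [hej]; exact Finset.mem_image_of_mem x (Finset.mem_univ i0)
      have h3 := Finset.card_le_card h1
      rw [Finset.card_erase_of_mem h2] at h3
      have h4 : (Finset.image x Finset.univ).card ≤ k := by
        calc (Finset.image x Finset.univ).card ≤ Finset.univ.card := Finset.card_image_le
          _ = k := by simp
      omega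
    set iso := T.orderIsoOfFin rfl with hiso
    -- membership of T-values in S (j+1)
    have hTS : ∀ w ∈ T, w ∈ S (j+1) ∧ w < e p := by
      intro w hw
      rw [Finset.mem_filter, Finset.mem_image] at hw
      obtain ⟨⟨i, -, rfl⟩, hlt⟩ := hw
      have := hx i
      simp only [Finset.mem_image, Finset.mem_range] at this
      obtain ⟨j', hj', hej'⟩ := this
      have hjj' : j < j' := hesm.lt_iff_lt.mp (by rw [hej']; exact hlt)
      constructor
      · rw [← hej']; exact hanti (j+1) j' hjj' (hmem j')
      · rw [← hej']; exact hesm hj'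
    have hxT : ∀ i : Fin k, x i ≠ e j → x i ∈ T := by
      intro i hne
      rw [Finset.mem_filter]
      refine ⟨Finset.mem_image_of_mem x (Finset.mem_univ i), ?_⟩
      have := hmin i (Finset.mem_univ i)
      rw [hej] at *
      omega
    set pat : Fin k → Fin k := fun i =>
      if h : x i = e j then ⟨0, hk⟩
      else ⟨((iso.symm ⟨x i, hxT i h⟩ : Fin m) : ℕ) + 1, by
        have := (iso.symm ⟨x i, hxT i h⟩).isLt; omega⟩ with hpat
    set A : Fin (k-1) → ℕ := fun t =>
      if h : (t : ℕ) < m then (iso ⟨t, h⟩ : ℕ)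
      else Nat.nth (· ∈ S (j+1)) (e p + ((t : ℕ) - m)) with hA
    have hisoval : ∀ h : Fin m, (iso h : ℕ) ∈ T := fun h => (iso h).2
    have hnth_mem : ∀ n, Nat.nth (· ∈ S (j+1)) n ∈ S (j+1) :=
      fun n => Nat.nth_mem_of_infinite (hSinf (j+1)) n
    have hnth_sm : StrictMono (Nat.nth (· ∈ S (j+1))) := Nat.nth_strictMono (hSinf (j+1))
    have hA_mem : ∀ t, A t ∈ S (j+1) := by
      intro t
      rw [hA]
      dsimp only
      split
      · exact (hTS _ (hisoval _)).1
      · exact hnth_mem _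
    have hA_sm : StrictMono A := by
      intro t1 t2 hlt
      rw [hA]
      dsimp only
      rcases Nat.lt_or_ge (t1 : ℕ) m with h1 | h1 <;> rcases Nat.lt_or_ge (t2 : ℕ) m with h2 | h2
      · rw [dif_pos h1, dif_pos h2]
        have : (⟨(t1:ℕ), h1⟩ : Fin m) < ⟨(t2:ℕ), h2⟩ := hlt
        exact_mod_cast iso.strictMono this
      · rw [dif_pos h1, dif_neg (by omega)]
        calc (iso ⟨(t1:ℕ), h1⟩ : ℕ) < e p := (hTS _ (hisoval _)).2
          _ ≤ Nat.nth (· ∈ S (j+1)) (e p + ((t2:ℕ) - m)) := by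
              calc e p ≤ e p + ((t2:ℕ) - m) := Nat.le_add_right _ _
                _ ≤ _ := hnth_sm.le_apply
      · omega
      · rw [dif_neg (by omega), dif_neg (by omega)]
        exact hnth_sm (by have : (t1:ℕ) < (t2:ℕ) := hlt; omega)
    have hxe : x = tup k (e j) pat A := by
      funext i
      rw [tup]
      by_cases h : x i = e j
      · have hp0 : ((pat i : Fin k) : ℕ) = 0 := by rw [hpat]; simp [h]
        rw [dif_pos hp0, h]
      · have hp0 : ((pat i : Fin k) : ℕ) = ((iso.symm ⟨x i, hxT i h⟩ : Fin m) : ℕ) + 1 := by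
          rw [hpat]; simp [h]
        rw [dif_neg (by omega)]
        rw [hA]
        dsimp only
        have hlt : ((pat i : Fin k) : ℕ) - 1 < m := by
          rw [hp0, Nat.add_sub_cancel]; exact (iso.symm ⟨x i, hxT i h⟩).isLt
        rw [dif_pos hlt]
        have : (⟨((pat i : Fin k) : ℕ) - 1, hlt⟩ : Fin m) = iso.symm ⟨x i, hxT i h⟩ := by
          apply Fin.ext; simp [hp0]
        rw [this]
        simp
    have hpat0 : ∃ i, ((pat i : Fin k) : ℕ) = 0 := by
      refine ⟨i0, ?_⟩
      rw [hpat]; simp [hej.symm]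
    have hB_sm : StrictMono (fun t : Fin (k-1) => Nat.nth (· ∈ S (j+1)) t) := by
      intro t1 t2 hlt
      exact hnth_sm (by exact_mod_cast hlt)
    have hB_mem : ∀ t : Fin (k-1), Nat.nth (· ∈ S (j+1)) (t : ℕ) ∈ S (j+1) :=
      fun t => hnth_mem _
    have := hkey j pat A (fun t => Nat.nth (· ∈ S (j+1)) t) hA_sm hB_sm hA_mem hB_mem hpat0
    refine ⟨(⟨j, hjp⟩, pat), ?_⟩
    dsimp only
    rw [← this, ← hxe]
  first
  | exact (Set.finite_range _).subset hsubG
  | calc (F '' {x : Fin k → ℕ | ∀ i, x i ∈ (Finset.range p).image e}).ncard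
        ≤ (Set.range (fun q : Fin p × (Fin k → Fin k) =>
            F (tup k (e q.1) q.2 (fun t => Nat.nth (· ∈ S (q.1+1)) t)))).ncard :=
          Set.ncard_le_ncard hsubG (Set.finite_range _)
      _ ≤ Nat.card (Fin p × (Fin k → Fin k)) := by
          rw [← Set.image_univ]
          calc _ ≤ (Set.univ : Set (Fin p × (Fin k → Fin k))).ncard :=
                Set.ncard_image_le Set.finite_univ
            _ = _ := Set.ncard_univ _
      _ = p * k ^ k := by simp [Nat.card_eq_fintype_card]
      _ = k ^ k * p := Nat.mul_comm _ _
  }
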